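/- Consider an HMM with diagonal interactions on ℂ^{d_E} ⊗ ℂ^{d_P}: H_E = Σᵢ hᵢ Eᵢᵢ with hᵢ ∈ ℝ, H_EP = Σᵢ Eᵢᵢ ⊗ Hᵢ with each Hᵢ a Hermitian d_P×d_P matrix, jump operators L_k = Σᵢ Eᵢᵢ ⊗ M_{k,i} for k = 1,…,r, a Hermitian d_P×d_P matrix G, and ω ∈ ℝ, with Lindbladian ℒ(ρ) = −i[H_EP + ω(I_{d_E} ⊗ G) + ω(H_E ⊗ I_{d_P}), ρ] + Σ_k (L_k ρ L_k† − (1/2){L_k†L_k, ρ}). Then ℒ commutes with the environment dephasing map D_E, i.e., ℒ ∘ D_E = D_E ∘ ℒ, and consequently for every t ∈ ℝ and every d_E·d_P × d_E·d_P matrix ρ: Tr_E(exp(t·ℒ)(ρ)) = Tr_E(exp(t·ℒ)(D_E(ρ))). -/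

import Mathlib

open scoped BigOperators
open Matrix

/-- Kronecker product of two matrices (environment factor first). -/
def kron {n₁ m₁ n₂ m₂ : Type*} (A : Matrix n₁ m₁ ℂ) (B : Matrix n₂ m₂ ℂ) :
    Matrix (n₁ × n₂) (m₁ × m₂) ℂ :=
  Matrix.of fun p q => A p.1 q.1 * B p.2 q.2

/-- The diagonal matrix unit `Eᵢᵢ = eᵢeᵢ†`. -/
def Eii {dE : ℕ} (i : Fin dE) : Matrix (Fin dE) (Fin dE) ℂ :=
  Matrix.single i i 1

/-- Partial trace over the environment:
`Tr_E(M) = Σᵢ (eᵢ† ⊗ I) M (eᵢ ⊗ I)`. -/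
noncomputable def TrE {dE dP : ℕ} (M : Matrix (Fin dE × Fin dP) (Fin dE × Fin dP) ℂ) :
    Matrix (Fin dP) (Fin dP) ℂ :=
  ∑ i : Fin dE, Matrix.of fun p q => M (i, p) (i, q)

/-- The environment dephasing map `D_E(ρ) = Σᵢ (Eᵢᵢ ⊗ I) ρ (Eᵢᵢ ⊗ I)`. -/
noncomputable def DephE {dE dP : ℕ} (ρ : Matrix (Fin dE × Fin dP) (Fin dE × Fin dP) ℂ) :
    Matrix (Fin dE × Fin dP) (Fin dE × Fin dP) ℂ :=
  ∑ i : Fin dE, kron (Eii i) (1 : Matrix (Fin dP) (Fin dP) ℂ) * ρ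
      * kron (Eii i) (1 : Matrix (Fin dP) (Fin dP) ℂ)

/-- The exponential `exp(L)` of an endomorphism of the matrix space, applied to `ρ`,
via its power series. -/
noncomputable def expApply {dE dP : ℕ}
    (L : Module.End ℂ (Matrix (Fin dE × Fin dP) (Fin dE × Fin dP) ℂ))
    (ρ : Matrix (Fin dE × Fin dP) (Fin dE × Fin dP) ℂ) :
    Matrix (Fin dE × Fin dP) (Fin dE × Fin dP) ℂ :=
  ∑' n : ℕ, ((n.factorial : ℂ)⁻¹) • ((L ^ n) ρ)

lemma dephE_apply {dE dP : ℕ} (ρ : Matrix (Fin dE × Fin dP) (Fin dE × Fin dP) ℂ)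
    (a b : Fin dE × Fin dP) :
    DephE ρ a b = if a.1 = b.1 then ρ a b else 0 := by
  simp only [DephE, Matrix.sum_apply, Matrix.mul_apply, kron, Eii, Matrix.of_apply,
    Matrix.one_apply, Matrix.single, Fintype.sum_prod_type]
  simp [Finset.mul_sum, Finset.sum_ite_eq, Finset.sum_ite_eq', ite_and, mul_ite, mul_comm]
  split_ifs <;> simp_all

/-- block-diagonal in the environment index -/
def BD {dE dP : ℕ} (A : Matrix (Fin dE × Fin dP) (Fin dE × Fin dP) ℂ) : Prop :=
  ∀ a b, a.1 ≠ b.1 → A a b = 0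

lemma dephE_add {dE dP : ℕ} (x y : Matrix (Fin dE × Fin dP) (Fin dE × Fin dP) ℂ) :
    DephE (x + y) = DephE x + DephE y := by
  ext a b; simp [dephE_apply]; split_ifs <;> simp
lemma dephE_sub {dE dP : ℕ} (x y : Matrix (Fin dE × Fin dP) (Fin dE × Fin dP) ℂ) :
    DephE (x - y) = DephE x - DephE y := by
  ext a b; simp [dephE_apply]; split_ifs <;> simp
lemma dephE_smul {dE dP : ℕ} (c : ℂ) (x : Matrix (Fin dE × Fin dP) (Fin dE × Fin dP) ℂ) :
    DephE (c • x) = c • DephE x := by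
  ext a b; simp [dephE_apply]
lemma dephE_sum {dE dP n : ℕ} (f : Fin n → Matrix (Fin dE × Fin dP) (Fin dE × Fin dP) ℂ) :
    DephE (∑ k, f k) = ∑ k, DephE (f k) := by
  ext a b; simp [dephE_apply, Matrix.sum_apply]

lemma dephE_mul_left {dE dP : ℕ} {A ρ : Matrix (Fin dE × Fin dP) (Fin dE × Fin dP) ℂ}
    (hA : BD A) : DephE (A * ρ) = A * DephE ρ := by
  ext a b
  simp only [dephE_apply, Matrix.mul_apply]
  by_cases hab : a.1 = b.1
  · rw [if_pos hab]
    refine Finset.sum_congr rfl fun c _ => ?_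
    by_cases hc : c.1 = b.1
    · rw [if_pos hc]
    · rw [hA a c (fun e => hc (e.symm.trans hab))]; simp
  · rw [if_neg hab]
    refine (Finset.sum_eq_zero fun c _ => ?_).symm
    by_cases hc : c.1 = b.1
    · rw [hA a c (fun e => hab (e.trans hc))]; simp
    · rw [if_neg hc, mul_zero]

lemma dephE_mul_right {dE dP : ℕ} {A ρ : Matrix (Fin dE × Fin dP) (Fin dE × Fin dP) ℂ}
    (hA : BD A) : DephE (ρ * A) = DephE ρ * A := by
  ext a b
  simp only [dephE_apply, Matrix.mul_apply]
  by_cases hab : a.1 = b.1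
  · rw [if_pos hab]
    refine Finset.sum_congr rfl fun c _ => ?_
    by_cases hc : a.1 = c.1
    · rw [if_pos hc]
    · rw [hA c b (fun e => hc (hab.trans e.symm))]; simp
  · rw [if_neg hab]
    refine (Finset.sum_eq_zero fun c _ => ?_).symm
    by_cases hc : a.1 = c.1
    · rw [hA c b (fun e => hab (hc.trans e))]; simp
    · rw [if_neg hc, zero_mul]

lemma bd_kron_Eii {dE dP : ℕ} (i : Fin dE) (X : Matrix (Fin dP) (Fin dP) ℂ) :
    BD (kron (Eii i) X) := by
  intro a b hab
  simp only [kron, Eii, Matrix.of_apply, Matrix.single, ite_and]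
  split_ifs with h1 h2
  · exact absurd (h1.symm.trans h2) hab
  · ring
  · ring
lemma bd_kron_one {dE dP : ℕ} (X : Matrix (Fin dP) (Fin dP) ℂ) :
    BD (kron (1 : Matrix (Fin dE) (Fin dE) ℂ) X) := by
  intro a b hab
  simp [kron, Matrix.one_apply, hab]
lemma bd_kron_diag {dE dP : ℕ} (d : Fin dE → ℂ) (X : Matrix (Fin dP) (Fin dP) ℂ) :
    BD (kron (Matrix.diagonal d) X) := by
  intro a b hab
  simp [kron, Matrix.diagonal_apply_ne _ hab]
lemma bd_add {dE dP : ℕ} {A B : Matrix (Fin dE × Fin dP) (Fin dE × Fin dP) ℂ}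
    (hA : BD A) (hB : BD B) : BD (A + B) := fun a b hab => by
  simp [Matrix.add_apply, hA a b hab, hB a b hab]
lemma bd_smul {dE dP : ℕ} {A : Matrix (Fin dE × Fin dP) (Fin dE × Fin dP) ℂ} (c : ℂ)
    (hA : BD A) : BD (c • A) := fun a b hab => by
  simp [hA a b hab]
lemma bd_sum {dE dP n : ℕ} {f : Fin n → Matrix (Fin dE × Fin dP) (Fin dE × Fin dP) ℂ}
    (hf : ∀ k, BD (f k)) : BD (∑ k, f k) := fun a b hab => by
  simp [Matrix.sum_apply, fun k => hf k a b hab]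
lemma bd_mul {dE dP : ℕ} {A B : Matrix (Fin dE × Fin dP) (Fin dE × Fin dP) ℂ}
    (hA : BD A) (hB : BD B) : BD (A * B) := fun a b hab => by
  rw [Matrix.mul_apply]
  refine Finset.sum_eq_zero fun c _ => ?_
  by_cases hc : a.1 = c.1
  · rw [hB c b (fun e => hab (hc.trans e))]; ring
  · rw [hA a c hc]; ring
lemma bd_conjTranspose {dE dP : ℕ} {A : Matrix (Fin dE × Fin dP) (Fin dE × Fin dP) ℂ}
    (hA : BD A) : BD Aᴴ := fun a b hab => by
  simp [Matrix.conjTranspose_apply, hA b a (fun e => hab e.symm)]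

lemma trE_dephE {dE dP : ℕ} (M : Matrix (Fin dE × Fin dP) (Fin dE × Fin dP) ℂ) :
    TrE (DephE M) = TrE M := by
  unfold TrE
  refine Finset.sum_congr rfl fun i _ => ?_
  ext p q
  simp [dephE_apply]

lemma trE_aux_add {dE dP : ℕ} (x y : Matrix (Fin dE × Fin dP) (Fin dE × Fin dP) ℂ) :
    TrE (x + y) = TrE x + TrE y := by
  unfold TrE
  rw [← Finset.sum_add_distrib]
  refine Finset.sum_congr rfl fun i _ => ?_
  ext p q
  simp
lemma trE_aux_smul {dE dP : ℕ} (c : ℂ) (x : Matrix (Fin dE × Fin dP) (Fin dE × Fin dP) ℂ) :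
    TrE (c • x) = c • TrE x := by
  unfold TrE
  rw [Finset.smul_sum]
  refine Finset.sum_congr rfl fun i _ => ?_
  ext p q
  simp

section analytic
attribute [local instance] Matrix.normedAddCommGroup Matrix.normedSpace

noncomputable abbrev matNormTop {m n : Type*} [Fintype m] [Fintype n] : TopologicalSpace (Matrix m n ℂ) :=
  (Matrix.normedAddCommGroup).toUniformSpace.toTopologicalSpace
attribute [local instance] matNormTop

variable {dE dP : ℕ}

lemma norm_pow_apply_le (L : Module.End ℂ (Matrix (Fin dE × Fin dP) (Fin dE × Fin dP) ℂ))
    (n : ℕ) (ρ : Matrix (Fin dE × Fin dP) (Fin dE × Fin dP) ℂ) :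
    ‖(L ^ n) ρ‖ ≤ ‖LinearMap.toContinuousLinearMap L‖ ^ n * ‖ρ‖ := by
  induction n generalizing ρ with
  | zero => simp
  | succ n ih =>
    rw [show (L ^ (n+1)) ρ = (L ^ n) (L ρ) by rw [pow_succ, Module.End.mul_apply], pow_succ]
    calc ‖(L ^ n) (L ρ)‖ ≤ ‖LinearMap.toContinuousLinearMap L‖ ^ n * ‖L ρ‖ := ih _
      _ ≤ ‖LinearMap.toContinuousLinearMap L‖ ^ n
          * (‖LinearMap.toContinuousLinearMap L‖ * ‖ρ‖) := by
        refine mul_le_mul_of_nonneg_left ?_ (by positivity)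
        exact (LinearMap.toContinuousLinearMap L).le_opNorm ρ
      _ = _ := by ring

lemma summable_exp_terms (L : Module.End ℂ (Matrix (Fin dE × Fin dP) (Fin dE × Fin dP) ℂ))
    (ρ : Matrix (Fin dE × Fin dP) (Fin dE × Fin dP) ℂ) :
    Summable fun n : ℕ => ((n.factorial : ℂ)⁻¹) • ((L ^ n) ρ) := by
  set C := ‖LinearMap.toContinuousLinearMap L‖ with hC
  refine Summable.of_norm ?_
  refine Summable.of_nonneg_of_le (fun n => norm_nonneg _) (fun n => ?_)
    ((Real.summable_pow_div_factorial C).mul_right ‖ρ‖)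
  rw [norm_smul]
  have h1 : ‖((n.factorial : ℂ)⁻¹)‖ = ((n.factorial : ℝ))⁻¹ := by
    rw [norm_inv]
    simp
  rw [h1]
  calc ((n.factorial : ℝ))⁻¹ * ‖(L ^ n) ρ‖
      ≤ ((n.factorial : ℝ))⁻¹ * (C ^ n * ‖ρ‖) :=
        mul_le_mul_of_nonneg_left (norm_pow_apply_le L n ρ) (by positivity)
    _ = C ^ n / (n.factorial : ℝ) * ‖ρ‖ := by ring

lemma trE_expApply (L : Module.End ℂ (Matrix (Fin dE × Fin dP) (Fin dE × Fin dP) ℂ))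
    (hcomm : ∀ ρ, L (DephE ρ) = DephE (L ρ))
    (ρ : Matrix (Fin dE × Fin dP) (Fin dE × Fin dP) ℂ) :
    TrE (expApply L ρ) = TrE (expApply L (DephE ρ)) := by
  have hpow : ∀ (n : ℕ) ρ, (L ^ n) (DephE ρ) = DephE ((L ^ n) ρ) := by
    intro n
    induction n with
    | zero => intro ρ; simp
    | succ n ih =>
      intro ρ
      rw [show (L ^ (n+1)) (DephE ρ) = (L ^ n) (L (DephE ρ)) by
            rw [pow_succ, Module.End.mul_apply],
          hcomm, ih,
          show (L ^ n) (L ρ) = (L ^ (n+1)) ρ by rw [pow_succ, Module.End.mul_apply]]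
  let T : Matrix (Fin dE × Fin dP) (Fin dE × Fin dP) ℂ →ₗ[ℂ] Matrix (Fin dP) (Fin dP) ℂ :=
    { toFun := TrE, map_add' := trE_aux_add, map_smul' := trE_aux_smul }
  let D : Matrix (Fin dE × Fin dP) (Fin dE × Fin dP) ℂ →ₗ[ℂ]
      Matrix (Fin dE × Fin dP) (Fin dE × Fin dP) ℂ :=
    { toFun := DephE, map_add' := dephE_add, map_smul' := dephE_smul }
  let Tc := LinearMap.toContinuousLinearMap T
  let Dc := LinearMap.toContinuousLinearMap D
  have hs := summable_exp_terms L ρ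
  have h2 : expApply L (DephE ρ) = ∑' n : ℕ, DephE (((n.factorial : ℂ)⁻¹) • ((L ^ n) ρ)) := by
    unfold expApply
    congr 1
    funext n
    rw [hpow, dephE_smul]
  have hsD : Summable fun n : ℕ => DephE (((n.factorial : ℂ)⁻¹) • ((L ^ n) ρ)) := by
    have := hs.map Dc.toLinearMap.toAddMonoidHom Dc.continuous
    exact this
  calc TrE (expApply L ρ) = Tc (∑' n : ℕ, ((n.factorial : ℂ)⁻¹) • ((L ^ n) ρ)) := rfl
    _ = ∑' n : ℕ, Tc (((n.factorial : ℂ)⁻¹) • ((L ^ n) ρ)) := Tc.map_tsum hs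
    _ = ∑' n : ℕ, Tc (DephE (((n.factorial : ℂ)⁻¹) • ((L ^ n) ρ))) := by
        congr 1
        funext n
        exact (trE_dephE _).symm
    _ = Tc (∑' n : ℕ, DephE (((n.factorial : ℂ)⁻¹) • ((L ^ n) ρ))) := (Tc.map_tsum hsD).symm
    _ = TrE (∑' n : ℕ, DephE (((n.factorial : ℂ)⁻¹) • ((L ^ n) ρ))) := rfl
    _ = TrE (expApply L (DephE ρ)) := by rw [h2]

end analytic

/-- For an HMM with diagonal interactions, the Lindbladian `ℒ` commutes
with the environment dephasing map `D_E`, and consequently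
`Tr_E(exp(tℒ)(ρ)) = Tr_E(exp(tℒ)(D_E(ρ)))` for all `t` and all `ρ`. -/
theorem stmt11 (dE dP : ℕ) (h : Fin dE → ℝ)
    (Hp : Fin dE → Matrix (Fin dP) (Fin dP) ℂ) (hHp : ∀ i, (Hp i).IsHermitian)
    (r : ℕ) (Mk : Fin r → Fin dE → Matrix (Fin dP) (Fin dP) ℂ)
    (G : Matrix (Fin dP) (Fin dP) ℂ) (hG : G.IsHermitian) (ω : ℝ)
    (HE : Matrix (Fin dE) (Fin dE) ℂ) (hHE : HE = Matrix.diagonal fun i => (h i : ℂ))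
    (HEP : Matrix (Fin dE × Fin dP) (Fin dE × Fin dP) ℂ)
    (hHEP : HEP = ∑ i, kron (Eii i) (Hp i))
    (Lop : Fin r → Matrix (Fin dE × Fin dP) (Fin dE × Fin dP) ℂ)
    (hLop : ∀ k, Lop k = ∑ i, kron (Eii i) (Mk k i))
    (ℒ : Module.End ℂ (Matrix (Fin dE × Fin dP) (Fin dE × Fin dP) ℂ))
    (hℒ : ∀ ρ, ℒ ρ =
      -(Complex.I) • ((HEP + (ω : ℂ) • kron (1 : Matrix (Fin dE) (Fin dE) ℂ) G
            + (ω : ℂ) • kron HE (1 : Matrix (Fin dP) (Fin dP) ℂ)) * ρ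
          - ρ * (HEP + (ω : ℂ) • kron (1 : Matrix (Fin dE) (Fin dE) ℂ) G
            + (ω : ℂ) • kron HE (1 : Matrix (Fin dP) (Fin dP) ℂ)))
        + ∑ k, (Lop k * ρ * (Lop k)ᴴ
            - ((1 : ℂ)/2) • ((Lop k)ᴴ * Lop k * ρ + ρ * ((Lop k)ᴴ * Lop k)))) :
    (∀ ρ, ℒ (DephE ρ) = DephE (ℒ ρ)) ∧
    (∀ (t : ℝ) (ρ : Matrix (Fin dE × Fin dP) (Fin dE × Fin dP) ℂ),
      TrE (expApply ((t : ℂ) • ℒ) ρ) = TrE (expApply ((t : ℂ) • ℒ) (DephE ρ))) := by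
  
  have hBDH : BD (HEP + (ω : ℂ) • kron (1 : Matrix (Fin dE) (Fin dE) ℂ) G
      + (ω : ℂ) • kron HE (1 : Matrix (Fin dP) (Fin dP) ℂ)) := by
    refine bd_add (bd_add ?_ ?_) ?_
    · rw [hHEP]; exact bd_sum fun i => bd_kron_Eii i (Hp i)
    · exact bd_smul _ (bd_kron_one G)
    · rw [hHE]; exact bd_smul _ (bd_kron_diag _ _)
  have hBDL : ∀ k, BD (Lop k) := fun k => by
    rw [hLop]; exact bd_sum fun i => bd_kron_Eii i _
  have key : ∀ ρ, ℒ (DephE ρ) = DephE (ℒ ρ) := by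
    intro ρ
    rw [hℒ ρ, hℒ (DephE ρ), dephE_add, dephE_smul, dephE_sub,
      dephE_mul_left hBDH, dephE_mul_right hBDH, dephE_sum]
    congr 1
    refine Finset.sum_congr rfl fun k _ => ?_
    rw [dephE_sub, dephE_smul, dephE_add,
      dephE_mul_right (bd_conjTranspose (hBDL k)), dephE_mul_left (hBDL k),
      dephE_mul_left (bd_mul (bd_conjTranspose (hBDL k)) (hBDL k)),
      dephE_mul_right (bd_mul (bd_conjTranspose (hBDL k)) (hBDL k))]
  refine ⟨key, fun t ρ => ?_⟩
  refine trE_expApply _ (fun σ => ?_) ρ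
  rw [LinearMap.smul_apply, LinearMap.smul_apply, key, dephE_smul]
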